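/- Let d >= 2 and let A be a d-by-d real matrix with nonnegative entries and determinant 1. Then for every Borel set S contained in the standard simplex Delta, the measure of the image PA(S) satisfies mu(PA(S)) = \int_S ||A x||_1^{-d} d mu(x). In other words, the Jacobian of the projective linear map PA restricted to the standard simplex equals 1/||A x||_1^d (equation (5.2) of the paper, following Veech). -/

import Mathlib

open MeasureTheory

/-- The standard simplex `Δ = {x : ℝ^d | ∀ i, 0 ≤ x i, ∑ i, x i = 1}`,
viewed inside Euclidean space. -/
def euclideanStdSimplex (d : ℕ) : Set (EuclideanSpace ℝ (Fin d)) :=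
  {x | (∀ i, 0 ≤ x i) ∧ ∑ i, x i = 1}

/-- The projectivized linear map `PA(x) = A x / ‖A x‖₁`. -/
noncomputable def projLinMap (d : ℕ) (A : Matrix (Fin d) (Fin d) ℝ) :
    EuclideanSpace ℝ (Fin d) → EuclideanSpace ℝ (Fin d) :=
  fun x => (WithLp.equiv 2 (Fin d → ℝ)).symm
    ((∑ i, |A.mulVec (fun j => x j) i|)⁻¹ • A.mulVec (fun j => x j))


open MeasureTheory Matrix

namespace JacAux

variable {d : ℕ}

/-- The sum-of-coordinates linear functional on Euclidean space. -/
noncomputable def sumLM (d : ℕ) : EuclideanSpace ℝ (Fin d) →ₗ[ℝ] ℝ where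
  toFun x := ∑ i, x i
  map_add' x y := by simp [Finset.sum_add_distrib]
  map_smul' c x := by simp [Finset.mul_sum]

@[simp] lemma sumLM_apply (x : EuclideanSpace ℝ (Fin d)) : sumLM d x = ∑ i, x i := rfl

/-- Matrix multiplication as a linear map on Euclidean space. -/
noncomputable def mulVecLM (d : ℕ) (A : Matrix (Fin d) (Fin d) ℝ) :
    EuclideanSpace ℝ (Fin d) →ₗ[ℝ] EuclideanSpace ℝ (Fin d) :=
  ((WithLp.linearEquiv 2 ℝ (Fin d → ℝ)).symm.toLinearMap.comp A.mulVecLin).comp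
    (WithLp.linearEquiv 2 ℝ (Fin d → ℝ)).toLinearMap

lemma mulVecLM_apply (A : Matrix (Fin d) (Fin d) ℝ) (x : EuclideanSpace ℝ (Fin d)) (i : Fin d) :
    mulVecLM d A x i = A.mulVec (fun j => x j) i := rfl

end JacAux

namespace JacAux2
open JacAux

variable {d : ℕ} (A : Matrix (Fin d) (Fin d) ℝ)

/-- the projective map, without absolute values. -/
noncomputable def pa (d : ℕ) (A : Matrix (Fin d) (Fin d) ℝ) :
    EuclideanSpace ℝ (Fin d) → EuclideanSpace ℝ (Fin d) :=
  fun x => (sumLM d (mulVecLM d A x))⁻¹ • mulVecLM d A x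

/-- candidate derivative of `pa` at `x`. -/
noncomputable def paDeriv (d : ℕ) (A : Matrix (Fin d) (Fin d) ℝ)
    (x : EuclideanSpace ℝ (Fin d)) : EuclideanSpace ℝ (Fin d) →L[ℝ] EuclideanSpace ℝ (Fin d) :=
  (sumLM d (mulVecLM d A x))⁻¹ • (mulVecLM d A).toContinuousLinearMap
    - ((sumLM d (mulVecLM d A x)) ^ 2)⁻¹ •
      (((sumLM d).comp (mulVecLM d A)).toContinuousLinearMap.smulRight (mulVecLM d A x))

lemma hasFDerivAt_pa (x : EuclideanSpace ℝ (Fin d))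
    (hs : sumLM d (mulVecLM d A x) ≠ 0) :
    HasFDerivAt (pa d A) (paDeriv d A x) x := by
  have hg : HasFDerivAt (fun y => sumLM d (mulVecLM d A y))
      ((sumLM d).comp (mulVecLM d A)).toContinuousLinearMap x :=
    (((sumLM d).comp (mulVecLM d A)).toContinuousLinearMap).hasFDerivAt
  have hginv : HasFDerivAt (fun y => (sumLM d (mulVecLM d A y))⁻¹)
      ((-(sumLM d (mulVecLM d A x) ^ 2)⁻¹) •
        ((sumLM d).comp (mulVecLM d A)).toContinuousLinearMap) x := by
    exact ((hasFDerivAt_inv hs).comp x hg).congr_fderiv (by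
      ext v
      simp [ContinuousLinearMap.smulRight_apply, mul_comm, Finset.sum_mul])
  have hAy : HasFDerivAt (fun y => mulVecLM d A y) (mulVecLM d A).toContinuousLinearMap x :=
    ((mulVecLM d A).toContinuousLinearMap).hasFDerivAt
  have := hginv.smul hAy
  refine this.congr_fderiv ?_
  ext v i
  simp only [paDeriv, ContinuousLinearMap.coe_sub', ContinuousLinearMap.coe_smul',
    Pi.sub_apply, Pi.smul_apply, ContinuousLinearMap.add_apply,
    ContinuousLinearMap.smulRight_apply, ContinuousLinearMap.coe_smul',
    ContinuousLinearMap.smul_apply, LinearMap.coe_toContinuousLinearMap',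
    LinearMap.coe_comp, Function.comp_apply, sumLM_apply, PiLp.smul_apply,
    PiLp.sub_apply, PiLp.add_apply, smul_eq_mul, neg_smul, neg_mul, Pi.neg_apply,
    ContinuousLinearMap.neg_apply, PiLp.neg_apply]
  ring

end JacAux2

namespace JacAux3
open JacAux JacAux2

noncomputable def projLinMap (d : ℕ) (A : Matrix (Fin d) (Fin d) ℝ) :
    EuclideanSpace ℝ (Fin d) → EuclideanSpace ℝ (Fin d) :=
  fun x => (WithLp.equiv 2 (Fin d → ℝ)).symm
    ((∑ i, |A.mulVec (fun j => x j) i|)⁻¹ • A.mulVec (fun j => x j))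

def Δ (d : ℕ) : Set (EuclideanSpace ℝ (Fin d)) :=
  {x | (∀ i, 0 ≤ x i) ∧ ∑ i, x i = 1}

variable {d : ℕ} {A : Matrix (Fin d) (Fin d) ℝ}

lemma mulVec_nonneg (hA : ∀ i j, 0 ≤ A i j) {x : EuclideanSpace ℝ (Fin d)} (hx : x ∈ Δ d)
    (i : Fin d) : 0 ≤ mulVecLM d A x i := by
  rw [mulVecLM_apply]
  simp only [Matrix.mulVec, dotProduct]
  exact Finset.sum_nonneg fun j _ => mul_nonneg (hA i j) (hx.1 j)

lemma mulVecLM_injective (hdet : A.det = 1) :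
    Function.Injective (mulVecLM d A) := by
  have hunit : IsUnit A.det := by rw [hdet]; exact isUnit_one
  intro u v huv
  have h : A.mulVec (fun j => u j) = A.mulVec (fun j => v j) := by
    funext i
    exact congrArg (fun z : EuclideanSpace ℝ (Fin d) => z i) huv
  have h3 : A⁻¹.mulVec (A.mulVec fun j => u j) = A⁻¹.mulVec (A.mulVec fun j => v j) := by
    rw [h]
  rw [Matrix.mulVec_mulVec, Matrix.mulVec_mulVec, Matrix.nonsing_inv_mul A hunit,
    Matrix.one_mulVec, Matrix.one_mulVec] at h3
  ext i
  exact congrFun h3 i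


lemma spos (hA : ∀ i j, 0 ≤ A i j) (hdet : A.det = 1) {x : EuclideanSpace ℝ (Fin d)}
    (hx : x ∈ Δ d) : 0 < sumLM d (mulVecLM d A x) := by
  rcases lt_or_eq_of_le (Finset.sum_nonneg fun i (_ : i ∈ Finset.univ) =>
    mulVec_nonneg hA hx i) with h | h
  · simpa using h
  · exfalso
    have hzero : ∀ i, mulVecLM d A x i = 0 := by
      intro i
      have := (Finset.sum_eq_zero_iff_of_nonneg (fun i _ => mulVec_nonneg hA hx i)).1 h.symm
      exact this i (Finset.mem_univ i)
    have hx0 : x = 0 := by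
      apply mulVecLM_injective hdet
      ext i
      simpa using hzero i
    have : (1 : ℝ) = 0 := by
      rw [← hx.2, hx0]
      simp
    norm_num at this

lemma pa_eq_projLinMap (hA : ∀ i j, 0 ≤ A i j) {x : EuclideanSpace ℝ (Fin d)} (hx : x ∈ Δ d) :
    projLinMap d A x = pa d A x := by
  unfold projLinMap pa
  have habs : ∀ i, |A.mulVec (fun j => x j) i| = A.mulVec (fun j => x j) i := fun i =>
    abs_of_nonneg (mulVec_nonneg hA hx i)
  have hsum : (∑ i, |A.mulVec (fun j => x j) i|) = sumLM d (mulVecLM d A x) := by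
    simp only [habs, sumLM_apply]
    rfl
  ext i
  rw [hsum]
  rfl

lemma sumLM_eq_one {x : EuclideanSpace ℝ (Fin d)} (hx : x ∈ Δ d) : sumLM d x = 1 := by
  simp [hx.2]

lemma sum_pa (hA : ∀ i j, 0 ≤ A i j) (hdet : A.det = 1) {x : EuclideanSpace ℝ (Fin d)}
    (hx : x ∈ Δ d) : sumLM d (pa d A x) = 1 := by
  have hs := spos hA hdet hx
  unfold pa
  rw [LinearMap.map_smul]
  field_simp
  rw [smul_eq_mul, one_div, inv_mul_cancel₀ (ne_of_gt hs)]

lemma pa_injOn (hA : ∀ i j, 0 ≤ A i j) (hdet : A.det = 1) :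
    Set.InjOn (pa d A) (Δ d) := by
  intro x hx y hy hxy
  have hsx := spos hA hdet hx
  have hsy := spos hA hdet hy
  have h1 : mulVecLM d A ((sumLM d (mulVecLM d A x))⁻¹ • x) =
      mulVecLM d A ((sumLM d (mulVecLM d A y))⁻¹ • y) := by
    rw [LinearMap.map_smul, LinearMap.map_smul]; exact hxy
  have h2 := mulVecLM_injective hdet h1
  have h3 := congrArg (sumLM d) h2
  rw [LinearMap.map_smul, LinearMap.map_smul, sumLM_eq_one hx, sumLM_eq_one hy] at h3
  simp only [smul_eq_mul, mul_one] at h3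
  rw [_root_.inv_inj] at h3
  rw [h3] at h2
  exact smul_right_injective _ (inv_ne_zero (ne_of_gt hsy)) h2

end JacAux3

namespace JacAux4
open JacAux

variable (d : ℕ)

noncomputable def H0 : Submodule ℝ (EuclideanSpace ℝ (Fin d)) := LinearMap.ker (sumLM d)

lemma mem_H0 {x : EuclideanSpace ℝ (Fin d)} : x ∈ H0 d ↔ sumLM d x = 0 := Iff.rfl

lemma finrank_H0 (hd : 1 ≤ d) : Module.finrank ℝ (H0 d) = d - 1 := by
  have hsurj : Function.Surjective (sumLM d) := by
    intro c
    refine ⟨(WithLp.equiv 2 (Fin d → ℝ)).symm (fun _ => c / d), ?_⟩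
    have hd0 : (d : ℝ) ≠ 0 := by positivity
    simp only [sumLM_apply, WithLp.equiv_symm_apply, PiLp.toLp_apply, Finset.sum_const, Finset.card_univ,
      Fintype.card_fin, nsmul_eq_mul]
    field_simp
  have h1 := LinearMap.finrank_range_add_finrank_ker (sumLM d)
  rw [LinearMap.range_eq_top.2 hsurj] at h1
  simp only [finrank_top, Module.finrank_self, finrank_euclideanSpace, Fintype.card_fin] at h1
  unfold H0
  omega

noncomputable def eIso (hd : 1 ≤ d) : EuclideanSpace ℝ (Fin (d - 1)) ≃ₗᵢ[ℝ] H0 d :=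
  ((stdOrthonormalBasis ℝ (H0 d)).reindex (finCongr (finrank_H0 d hd))).repr.symm

noncomputable def pt : EuclideanSpace ℝ (Fin d) :=
  (WithLp.equiv 2 (Fin d → ℝ)).symm (fun _ => (d : ℝ)⁻¹)

lemma sum_pt (hd : 1 ≤ d) : sumLM d (pt d) = 1 := by
  have hd0 : (d : ℝ) ≠ 0 := by positivity
  simp only [sumLM_apply, pt, WithLp.equiv_symm_apply, PiLp.toLp_apply, Finset.sum_const,
    Finset.card_univ, Fintype.card_fin, nsmul_eq_mul]
  field_simp

noncomputable def ψmap (hd : 1 ≤ d) : EuclideanSpace ℝ (Fin (d - 1)) → EuclideanSpace ℝ (Fin d) :=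
  fun u => pt d + (eIso d hd u : EuclideanSpace ℝ (Fin d))

lemma isometry_ψmap (hd : 1 ≤ d) : Isometry (ψmap d hd) := by
  apply Isometry.of_dist_eq
  intro u v
  unfold ψmap
  rw [dist_add_left, ← Subtype.dist_eq, (eIso d hd).dist_map]

lemma sum_ψmap (hd : 1 ≤ d) (u : EuclideanSpace ℝ (Fin (d - 1))) :
    sumLM d (ψmap d hd u) = 1 := by
  unfold ψmap
  rw [map_add, sum_pt d hd]
  have : (eIso d hd u : EuclideanSpace ℝ (Fin d)) ∈ H0 d := (eIso d hd u).2
  rw [mem_H0] at this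
  rw [this, add_zero]

lemma ψmap_injective (hd : 1 ≤ d) : Function.Injective (ψmap d hd) :=
  (isometry_ψmap d hd).injective

lemma ψmap_surjOn (hd : 1 ≤ d) {y : EuclideanSpace ℝ (Fin d)} (hy : sumLM d y = 1) :
    y ∈ Set.range (ψmap d hd) := by
  have hmem : y - pt d ∈ H0 d := by
    rw [mem_H0, map_sub, hy, sum_pt d hd, sub_self]
  refine ⟨(eIso d hd).symm ⟨y - pt d, hmem⟩, ?_⟩
  unfold ψmap
  rw [(eIso d hd).apply_symm_apply]
  simp

noncomputable def rmap (hd : 1 ≤ d) :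
    EuclideanSpace ℝ (Fin d) → EuclideanSpace ℝ (Fin (d - 1)) :=
  fun y => (eIso d hd).symm ((H0 d).orthogonalProjectionOnto (y - pt d))

lemma rmap_ψmap (hd : 1 ≤ d) (u : EuclideanSpace ℝ (Fin (d - 1))) :
    rmap d hd (ψmap d hd u) = u := by
  unfold rmap ψmap
  rw [add_sub_cancel_left]
  rw [Submodule.orthogonalProjectionOnto_mem_subspace_eq_self]
  exact (eIso d hd).symm_apply_apply u

lemma ψmap_rmap (hd : 1 ≤ d) {y : EuclideanSpace ℝ (Fin d)} (hy : sumLM d y = 1) :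
    ψmap d hd (rmap d hd y) = y := by
  obtain ⟨u, rfl⟩ := ψmap_surjOn d hd hy
  rw [rmap_ψmap]

/-- The derivative of `ψmap`. -/
noncomputable def ψCLM (hd : 1 ≤ d) :
    EuclideanSpace ℝ (Fin (d - 1)) →L[ℝ] EuclideanSpace ℝ (Fin d) :=
  (Submodule.subtypeL (H0 d)).comp (eIso d hd).toLinearIsometry.toContinuousLinearMap

lemma ψCLM_apply (hd : 1 ≤ d) (u : EuclideanSpace ℝ (Fin (d - 1))) :
    ψCLM d hd u = (eIso d hd u : EuclideanSpace ℝ (Fin d)) := rfl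

lemma hasFDerivAt_ψmap (hd : 1 ≤ d) (u : EuclideanSpace ℝ (Fin (d - 1))) :
    HasFDerivAt (ψmap d hd) (ψCLM d hd) u := by
  have : ψmap d hd = fun u => pt d + ψCLM d hd u := rfl
  rw [this]
  exact (ψCLM d hd).hasFDerivAt.const_add (pt d)

/-- The derivative of `rmap`. -/
noncomputable def rCLM (hd : 1 ≤ d) :
    EuclideanSpace ℝ (Fin d) →L[ℝ] EuclideanSpace ℝ (Fin (d - 1)) :=
  ((eIso d hd).symm.toLinearIsometry.toContinuousLinearMap).comp
    ((H0 d).orthogonalProjectionOnto)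

lemma hasFDerivAt_rmap (hd : 1 ≤ d) (y : EuclideanSpace ℝ (Fin d)) :
    HasFDerivAt (rmap d hd) (rCLM d hd) y := by
  have : rmap d hd = fun y => rCLM d hd y - rCLM d hd (pt d) := by
    funext z
    unfold rmap rCLM
    simp [map_sub]
  rw [this]
  exact (rCLM d hd).hasFDerivAt.sub_const _

lemma rCLM_apply_H0 (hd : 1 ≤ d) {z : EuclideanSpace ℝ (Fin d)} (hz : z ∈ H0 d) :
    rCLM d hd z = (eIso d hd).symm ⟨z, hz⟩ := by
  unfold rCLM
  simp only [ContinuousLinearMap.coe_comp', Function.comp_apply]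
  have h1 : (H0 d).orthogonalProjectionOnto z = ⟨z, hz⟩ := by
    apply Subtype.ext
    exact Submodule.starProjection_eq_self_iff.2 hz
  rw [h1]
  rfl

end JacAux4

namespace JacAux5
open MeasureTheory

variable (m : ℕ)

lemma hausdorff_pi_eq : (μH[(m : ℝ)] : Measure ((Fin m) → ℝ)) = volume := by
  have := MeasureTheory.hausdorffMeasure_pi_real (ι := Fin m)
  simpa using this

instance : (μH[(m : ℝ)] : Measure (EuclideanSpace ℝ (Fin m))).IsAddHaarMeasure := by
  refine { lt_top_of_isCompact := ?_, map_add_left_eq_self := ?_, open_pos := ?_ }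
  · intro K hK
    have hanti := PiLp.antilipschitzWith_ofLp 2 (fun _ : Fin m => ℝ)
    have h1 := hanti.le_hausdorffMeasure_image (by positivity : (0:ℝ) ≤ (m:ℝ)) K
    have h2 : IsCompact ((WithLp.equiv 2 (Fin m → ℝ)) '' K) :=
      hK.image (PiLp.continuous_ofLp 2 (fun _ : Fin m => ℝ))
    rw [hausdorff_pi_eq] at h1
    calc μH[(m:ℝ)] K ≤ _ := h1
      _ < ⊤ := by
        apply ENNReal.mul_lt_top
        · exact ENNReal.rpow_lt_top_of_nonneg (by positivity) ENNReal.coe_ne_top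
        · exact h2.measure_lt_top
  · intro b
    have := IsometryEquiv.map_hausdorffMeasure
      (IsometryEquiv.addLeft (G := EuclideanSpace ℝ (Fin m)) b) (m : ℝ)
    convert this using 2
    rfl
  · intro U hU hne
    have hlip := PiLp.lipschitzWith_ofLp 2 (fun _ : Fin m => ℝ)
    have h1 := hlip.hausdorffMeasure_image_le (by positivity : (0:ℝ) ≤ (m:ℝ)) U
    rw [hausdorff_pi_eq] at h1
    have hUopen : IsOpen ((WithLp.equiv 2 (Fin m → ℝ)) '' U) := by
      rw [Equiv.image_eq_preimage_symm]
      exact hU.preimage (PiLp.continuous_toLp 2 (fun _ : Fin m => ℝ))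
    have hpos : 0 < volume ((WithLp.equiv 2 (Fin m → ℝ)) '' U) :=
      hUopen.measure_pos _ (hne.image _)
    intro h0
    rw [h0] at h1
    simp at h1
    rw [show ⇑(WithLp.equiv 2 (Fin m → ℝ)) = WithLp.ofLp from rfl, h1] at hpos
    exact lt_irrefl 0 hpos

end JacAux5

namespace JacAux6

variable {E : Type*} [AddCommGroup E] [Module ℝ E]

/-- The shear map `(u, t) ↦ (L u + t • b, t)` on `E × ℝ`. -/
noncomputable def shearMap (L : E →ₗ[ℝ] E) (b : E) : (E × ℝ) →ₗ[ℝ] (E × ℝ) :=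
  LinearMap.prod (L.comp (LinearMap.fst ℝ E ℝ) + (LinearMap.snd ℝ E ℝ).smulRight b)
    (LinearMap.snd ℝ E ℝ)

@[simp] lemma shearMap_apply (L : E →ₗ[ℝ] E) (b : E) (u : E) (t : ℝ) :
    shearMap L b (u, t) = (L u + t • b, t) := rfl

lemma det_shearMap {ι : Type*} [Fintype ι] [DecidableEq ι] (bE : Module.Basis ι ℝ E)
    (L : E →ₗ[ℝ] E) (b : E) :
    LinearMap.det (shearMap L b) = LinearMap.det L := by
  classical
  let bP : Module.Basis (ι ⊕ Unit) ℝ (E × ℝ) := bE.prod (Module.Basis.singleton Unit ℝ)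
  rw [← LinearMap.det_toMatrix bP (shearMap L b), ← LinearMap.det_toMatrix bE L]
  have hM : LinearMap.toMatrix bP bP (shearMap L b) =
      Matrix.fromBlocks (LinearMap.toMatrix bE bE L)
        (Matrix.of fun i (_ : Unit) => bE.repr b i) 0 1 := by
    ext p q
    rcases p with i | p <;> rcases q with j | q <;>
      simp [bP, LinearMap.toMatrix_apply, Module.Basis.prod_apply, Matrix.fromBlocks,
        Module.Basis.singleton_apply, Matrix.one_apply]
  rw [hM, Matrix.det_fromBlocks_zero₂₁, Matrix.det_one, mul_one]

end JacAux6

namespace JacAux7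
open JacAux JacAux2 Matrix

variable {d : ℕ} (A : Matrix (Fin d) (Fin d) ℝ) (x : EuclideanSpace ℝ (Fin d))

/-- The full-space linear map whose determinant we compute:
`T v = paDeriv v + s⁻¹ (∑ v) • (A x)`. -/
noncomputable def Tlin (d : ℕ) (A : Matrix (Fin d) (Fin d) ℝ) (x : EuclideanSpace ℝ (Fin d)) :
    EuclideanSpace ℝ (Fin d) →ₗ[ℝ] EuclideanSpace ℝ (Fin d) :=
  (paDeriv d A x).toLinearMap +
    ((sumLM d (mulVecLM d A x))⁻¹ • (sumLM d).smulRight (mulVecLM d A x))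

lemma Tlin_apply (v : EuclideanSpace ℝ (Fin d)) :
    Tlin d A x v = (sumLM d (mulVecLM d A x))⁻¹ • mulVecLM d A v
      + ((sumLM d (mulVecLM d A x))⁻¹ * sumLM d v
        - ((sumLM d (mulVecLM d A x)) ^ 2)⁻¹ * sumLM d (mulVecLM d A v))
          • mulVecLM d A x := by
  set s := sumLM d (mulVecLM d A x)
  show paDeriv d A x v + s⁻¹ • (sumLM d v • mulVecLM d A x) = _
  ext i
  simp only [paDeriv, ContinuousLinearMap.coe_sub', Pi.sub_apply,
    ContinuousLinearMap.coe_smul', Pi.smul_apply, LinearMap.coe_toContinuousLinearMap',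
    ContinuousLinearMap.smulRight_apply, LinearMap.coe_comp, Function.comp_apply,
    PiLp.add_apply, PiLp.sub_apply, PiLp.smul_apply, smul_eq_mul]
  ring

lemma sum_paDeriv (hs : sumLM d (mulVecLM d A x) ≠ 0) (v : EuclideanSpace ℝ (Fin d)) :
    sumLM d (paDeriv d A x v) = 0 := by
  have : paDeriv d A x v = (sumLM d (mulVecLM d A x))⁻¹ • mulVecLM d A v
      - ((sumLM d (mulVecLM d A x)) ^ 2)⁻¹ • (sumLM d (mulVecLM d A v)) • mulVecLM d A x := by
    ext i
    simp only [paDeriv, ContinuousLinearMap.coe_sub', Pi.sub_apply,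
      ContinuousLinearMap.coe_smul', Pi.smul_apply, LinearMap.coe_toContinuousLinearMap',
      ContinuousLinearMap.smulRight_apply, LinearMap.coe_comp, Function.comp_apply,
      PiLp.sub_apply, PiLp.smul_apply, smul_eq_mul]
  rw [this, map_sub, LinearMap.map_smul, LinearMap.map_smul, LinearMap.map_smul]
  set s := sumLM d (mulVecLM d A x)
  simp only [smul_eq_mul]
  field_simp
  ring

lemma sum_Tlin (hs : sumLM d (mulVecLM d A x) ≠ 0) (v : EuclideanSpace ℝ (Fin d)) :
    sumLM d (Tlin d A x v) = sumLM d v := by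
  show sumLM d (paDeriv d A x v + _) = _
  rw [map_add, sum_paDeriv A x hs, zero_add]
  show sumLM d ((sumLM d (mulVecLM d A x))⁻¹ • (sumLM d v • mulVecLM d A x)) = _
  rw [LinearMap.map_smul, LinearMap.map_smul]
  set s := sumLM d (mulVecLM d A x)
  simp only [smul_eq_mul]
  field_simp

/-- The standard basis of Euclidean space. -/
noncomputable def bE (d : ℕ) : Module.Basis (Fin d) ℝ (EuclideanSpace ℝ (Fin d)) :=
  (Pi.basisFun ℝ (Fin d)).map (WithLp.linearEquiv 2 ℝ (Fin d → ℝ)).symm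

lemma bE_apply_coord (j i : Fin d) : bE d j i = if j = i then 1 else 0 := by
  simp only [bE, Module.Basis.map_apply, Pi.basisFun_apply]
  have : (WithLp.linearEquiv 2 ℝ (Fin d → ℝ)).symm (Pi.single j 1) i
      = (Pi.single j (1:ℝ) : Fin d → ℝ) i := rfl
  rw [this, Pi.single_apply]
  exact if_congr eq_comm rfl rfl

lemma mulVecLM_bE (j i : Fin d) : mulVecLM d A (bE d j) i = A i j := by
  rw [mulVecLM_apply]
  simp only [Matrix.mulVec, dotProduct]
  rw [Finset.sum_eq_single j]
  · rw [bE_apply_coord]; simp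
  · intro k _ hk; rw [bE_apply_coord]; simp [Ne.symm hk]
  · simp

lemma sum_bE (j : Fin d) : sumLM d (bE d j) = 1 := by
  simp only [sumLM_apply]
  rw [Finset.sum_eq_single j]
  · rw [bE_apply_coord]; simp
  · intro k _ hk; rw [bE_apply_coord]; simp [Ne.symm hk]
  · simp

lemma toMatrix_Tlin :
    LinearMap.toMatrix (bE d) (bE d) (Tlin d A x) =
      (sumLM d (mulVecLM d A x))⁻¹ • A +
        Matrix.replicateCol Unit (fun i => mulVecLM d A x i) *
          Matrix.replicateRow Unit (fun j => (sumLM d (mulVecLM d A x))⁻¹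
            - ((sumLM d (mulVecLM d A x)) ^ 2)⁻¹ * ∑ k, A k j) := by
  set s := sumLM d (mulVecLM d A x)
  ext i j
  rw [LinearMap.toMatrix_apply]
  have hrepr : ∀ z : EuclideanSpace ℝ (Fin d), (bE d).repr z i = z i := by
    intro z
    simp only [bE, Module.Basis.map_repr, LinearEquiv.trans_apply, Pi.basisFun_repr]
    rfl
  rw [hrepr, Tlin_apply]
  have h1 : sumLM d (mulVecLM d A (bE d j)) = ∑ k, A k j := by
    simp only [sumLM_apply]
    exact Finset.sum_congr rfl fun k _ => mulVecLM_bE A j k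
  simp only [PiLp.add_apply, PiLp.smul_apply, smul_eq_mul, mulVecLM_bE, sum_bE, h1,
    Matrix.add_apply, Matrix.smul_apply, Matrix.mul_apply, Finset.univ_unique,
    Finset.sum_const, Finset.card_singleton, one_smul, Matrix.replicateCol_apply, Matrix.replicateRow_apply,
    smul_eq_mul]
  ring

end JacAux7

namespace JacAux8
open JacAux JacAux2 JacAux7 Matrix

variable {d : ℕ} (A : Matrix (Fin d) (Fin d) ℝ) (x : EuclideanSpace ℝ (Fin d))

lemma det_Tlin (hdet : A.det = 1) (hx2 : sumLM d x = 1)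
    (hs : sumLM d (mulVecLM d A x) ≠ 0) :
    LinearMap.det (Tlin d A x) = ((sumLM d (mulVecLM d A x)) ^ d)⁻¹ := by
  classical
  rw [← LinearMap.det_toMatrix (bE d), toMatrix_Tlin]
  set s := sumLM d (mulVecLM d A x) with hsdef
  set w : Fin d → ℝ := fun i => mulVecLM d A x i with hw
  set φ : Fin d → ℝ := fun j => s⁻¹ - (s ^ 2)⁻¹ * ∑ k, A k j with hφ
  set B := s⁻¹ • A with hB
  have hBdet : B.det = (s⁻¹) ^ d := by
    rw [hB, Matrix.det_smul, hdet, Fintype.card_fin, mul_one]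
  have hBunit : IsUnit B.det := by
    rw [hBdet]
    exact isUnit_iff_ne_zero.2 (pow_ne_zero _ (inv_ne_zero hs))
  rw [Matrix.det_add_replicateCol_mul_replicateRow hBunit w φ]
  have hAxv : A *ᵥ (fun j => x j) = w := by
    funext i; rfl
  have hsum : ∑ k, ∑ j, A k j * x j = s := by
    rw [hsdef]
    simp only [sumLM_apply]
    refine Finset.sum_congr rfl fun k _ => ?_
    rw [mulVecLM_apply]
    simp [Matrix.mulVec, dotProduct]
  have hBinvw : B⁻¹ *ᵥ w = s • (fun j => x j) := by
    have h1 : B *ᵥ (s • (fun j => x j)) = w := by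
      rw [hB, Matrix.smul_mulVec, Matrix.mulVec_smul, hAxv, smul_smul,
        inv_mul_cancel₀ hs, one_smul]
    rw [← h1, Matrix.mulVec_mulVec, Matrix.nonsing_inv_mul B hBunit, Matrix.one_mulVec]
  have hentry : (Matrix.replicateRow Unit φ * B⁻¹ * Matrix.replicateCol Unit w) () () = φ ⬝ᵥ (B⁻¹ *ᵥ w) := by
    simp only [Matrix.mul_apply, Matrix.replicateRow_apply, Matrix.replicateCol_apply, dotProduct,
      Matrix.mulVec, Finset.sum_mul, Finset.mul_sum]
    rw [Finset.sum_comm]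
    refine Finset.sum_congr rfl fun j _ => Finset.sum_congr rfl fun k _ => by ring
  have hφdot : φ ⬝ᵥ (B⁻¹ *ᵥ w) = 0 := by
    rw [hBinvw]
    simp only [dotProduct, Pi.smul_apply, smul_eq_mul, hφ, sub_mul]
    rw [Finset.sum_sub_distrib]
    have e1 : ∑ j, s⁻¹ * (s * x j) = s⁻¹ * s * ∑ j, x j := by
      rw [Finset.mul_sum]
      exact Finset.sum_congr rfl fun j _ => by ring
    have e2 : ∑ j, (s ^ 2)⁻¹ * (∑ k, A k j) * (s * x j)
        = (s ^ 2)⁻¹ * s * ∑ j, (∑ k, A k j) * x j := by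
      rw [Finset.mul_sum]
      exact Finset.sum_congr rfl fun j _ => by ring
    have e3 : ∑ j, (∑ k, A k j) * x j = s := by
      rw [← hsum, Finset.sum_comm]
      exact Finset.sum_congr rfl fun j _ => by rw [Finset.sum_mul]
    have e4 : ∑ j, x j = 1 := hx2
    rw [e1, e2, e3, e4]
    field_simp
    ring
  rw [Matrix.det_unique (1 + Matrix.replicateRow Unit φ * B⁻¹ * Matrix.replicateCol Unit w)]
  simp only [Matrix.add_apply, Matrix.one_apply_eq, hentry, hφdot, add_zero, mul_one, hBdet]
  rw [inv_pow]

end JacAux8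

namespace JacAux9
open JacAux JacAux2 JacAux4 JacAux6 JacAux7 JacAux8

variable {d : ℕ} (hd : 1 ≤ d) (A : Matrix (Fin d) (Fin d) ℝ) (x : EuclideanSpace ℝ (Fin d))

/-- inclusion of `H0` composed with `eIso`, as a linear map. -/
noncomputable def eLin (hd : 1 ≤ d) :
    EuclideanSpace ℝ (Fin (d - 1)) →ₗ[ℝ] EuclideanSpace ℝ (Fin d) :=
  (H0 d).subtype.comp (eIso d hd).toLinearEquiv.toLinearMap

lemma eLin_apply (u : EuclideanSpace ℝ (Fin (d - 1))) :
    eLin hd u = (eIso d hd u : EuclideanSpace ℝ (Fin d)) := rfl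

lemma eLin_mem (u : EuclideanSpace ℝ (Fin (d - 1))) : eLin hd u ∈ H0 d := (eIso d hd u).2

lemma eLin_rCLM {z : EuclideanSpace ℝ (Fin d)} (hz : z ∈ H0 d) :
    eLin hd (rCLM d hd z) = z := by
  rw [rCLM_apply_H0 d hd hz, eLin_apply, (eIso d hd).apply_symm_apply]

lemma rCLM_eLin (u : EuclideanSpace ℝ (Fin (d - 1))) : rCLM d hd (eLin hd u) = u := by
  rw [rCLM_apply_H0 d hd (eLin_mem hd u)]
  rw [show (⟨eLin hd u, eLin_mem hd u⟩ : H0 d) = eIso d hd u from rfl]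
  exact (eIso d hd).symm_apply_apply u

lemma det_paDeriv_hyperplane (hdet : A.det = 1) (hx2 : sumLM d x = 1)
    (hs : sumLM d (mulVecLM d A x) ≠ 0) :
    (((rCLM d hd).comp ((paDeriv d A x).comp (ψCLM d hd)))).det
      = ((sumLM d (mulVecLM d A x)) ^ d)⁻¹ := by
  classical
  set s := sumLM d (mulVecLM d A x) with hsdef
  set c : EuclideanSpace ℝ (Fin d) := s⁻¹ • mulVecLM d A x with hc
  have hsc : sumLM d c = 1 := by
    rw [hc, LinearMap.map_smul, smul_eq_mul, inv_mul_cancel₀ hs]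
  -- the linear equivalence Φ : Em × ℝ ≃ E
  set Φlin : (EuclideanSpace ℝ (Fin (d - 1)) × ℝ) →ₗ[ℝ] EuclideanSpace ℝ (Fin d) :=
    (eLin hd).comp (LinearMap.fst ℝ _ ℝ) + (LinearMap.snd ℝ _ ℝ).smulRight c with hΦlin
  set Ξlin : EuclideanSpace ℝ (Fin d) →ₗ[ℝ] (EuclideanSpace ℝ (Fin (d - 1)) × ℝ) :=
    LinearMap.prod ((rCLM d hd : EuclideanSpace ℝ (Fin d) →L[ℝ] _).toLinearMap.comp
      (LinearMap.id - (sumLM d).smulRight c)) (sumLM d) with hΞlin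
  have hΦapp : ∀ u t, Φlin (u, t) = eLin hd u + t • c := fun u t => rfl
  have hΞapp : ∀ y, Ξlin y = (rCLM d hd (y - sumLM d y • c), sumLM d y) := fun y => rfl
  have h1 : Φlin.comp Ξlin = LinearMap.id := by
    apply LinearMap.ext
    intro y
    have hmem : y - sumLM d y • c ∈ H0 d := by
      rw [mem_H0, map_sub, LinearMap.map_smul, smul_eq_mul, hsc, mul_one, sub_self]
    simp only [LinearMap.comp_apply, LinearMap.id_apply, hΞapp, hΦapp]
    rw [eLin_rCLM hd hmem]
    abel
  have h2 : Ξlin.comp Φlin = LinearMap.id := by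
    apply LinearMap.ext
    intro z
    obtain ⟨u, t⟩ := z
    simp only [LinearMap.comp_apply, LinearMap.id_apply, hΞapp, hΦapp]
    have hσ : sumLM d (eLin hd u + t • c) = t := by
      rw [map_add, LinearMap.map_smul, smul_eq_mul, hsc, mul_one]
      have := eLin_mem hd u
      rw [mem_H0] at this
      rw [this, zero_add]
    rw [hσ]
    have : eLin hd u + t • c - t • c = eLin hd u := by abel
    rw [this, rCLM_eLin]
  set Φ : (EuclideanSpace ℝ (Fin (d - 1)) × ℝ) ≃ₗ[ℝ] EuclideanSpace ℝ (Fin d) :=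
    LinearEquiv.ofLinear Φlin Ξlin h1 h2 with hΦ
  set Llin : EuclideanSpace ℝ (Fin (d - 1)) →ₗ[ℝ] EuclideanSpace ℝ (Fin (d - 1)) :=
    (((rCLM d hd).comp ((paDeriv d A x).comp (ψCLM d hd)))).toLinearMap with hLlin
  set b : EuclideanSpace ℝ (Fin (d - 1)) := rCLM d hd (Tlin d A x c - c) with hb
  have hTc_mem : Tlin d A x c - c ∈ H0 d := by
    rw [mem_H0, map_sub, sum_Tlin A x hs, sub_self]
  have hpa_mem : ∀ v, paDeriv d A x v ∈ H0 d := fun v => by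
    rw [mem_H0]; exact sum_paDeriv A x hs v
  have key : ∀ z : EuclideanSpace ℝ (Fin (d - 1)) × ℝ,
      Tlin d A x (Φ z) = Φ (shearMap Llin b z) := by
    rintro ⟨u, t⟩
    have hΦz : Φ (u, t) = eLin hd u + t • c := rfl
    have hshear : Φ (shearMap Llin b (u, t)) = eLin hd (Llin u + t • b) + t • c := rfl
    rw [hΦz, hshear]
    have hTeu : Tlin d A x (eLin hd u) = paDeriv d A x (eLin hd u) := by
      rw [show Tlin d A x (eLin hd u)
          = paDeriv d A x (eLin hd u) + s⁻¹ • (sumLM d (eLin hd u) • mulVecLM d A x) from rfl]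
      have := eLin_mem hd u
      rw [mem_H0] at this
      rw [this, zero_smul, smul_zero, add_zero]
    have hLu : eLin hd (Llin u) = paDeriv d A x (eLin hd u) := by
      rw [hLlin]
      have : ψCLM d hd u = eLin hd u := rfl
      simp only [ContinuousLinearMap.coe_comp, LinearMap.comp_apply,
        ContinuousLinearMap.coe_coe, this]
      exact eLin_rCLM hd (hpa_mem (eLin hd u))
    have hbu : eLin hd b = Tlin d A x c - c := by
      rw [hb]
      exact eLin_rCLM hd hTc_mem
    rw [map_add (Tlin d A x), hTeu, map_add (eLin hd), hLu,
      (Tlin d A x).map_smul t c, (eLin hd).map_smul t b, hbu]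
    module
  have hconj : Φ.symm.toLinearMap.comp ((Tlin d A x).comp Φ.toLinearMap)
      = shearMap Llin b := by
    apply LinearMap.ext
    rintro z
    simp only [LinearMap.comp_apply, LinearEquiv.coe_coe]
    rw [key z, Φ.symm_apply_apply]
  have hdetconj : LinearMap.det (shearMap Llin b) = LinearMap.det (Tlin d A x) := by
    rw [← hconj]
    have := LinearMap.det_conj (Tlin d A x) Φ.symm
    simpa using this
  have hshear_det := det_shearMap (bE (d - 1)) Llin b
  have : ContinuousLinearMap.det ((rCLM d hd).comp ((paDeriv d A x).comp (ψCLM d hd)))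
      = LinearMap.det Llin := rfl
  rw [this, ← hshear_det, hdetconj, det_Tlin A x hdet hx2 hs]

end JacAux9

namespace JacMain
open JacAux JacAux2 JacAux3 JacAux4 JacAux5 JacAux6 JacAux7 JacAux8 JacAux9

theorem jacobian_projLinMap (d : ℕ) (hd : 2 ≤ d)
    (A : Matrix (Fin d) (Fin d) ℝ)
    (hA : ∀ i j, 0 ≤ A i j) (hdet : A.det = 1)
    (S : Set (EuclideanSpace ℝ (Fin d))) (hS : MeasurableSet S)
    (hSΔ : S ⊆ Δ d) :
    μH[(d : ℝ) - 1] (JacAux3.projLinMap d A '' S)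
      = ∫⁻ x in S, ENNReal.ofReal ((∑ i, |A.mulVec (fun j => x j) i|) ^ d)⁻¹
          ∂(μH[(d : ℝ) - 1] : Measure (EuclideanSpace ℝ (Fin d))) := by
  classical
  have hd1 : 1 ≤ d := by omega
  have hcast : ((d : ℝ) - 1) = ((d - 1 : ℕ) : ℝ) := by
    rw [Nat.cast_sub hd1]; norm_num
  rw [hcast]
  set m := d - 1 with hm
  -- the integrand
  set h : EuclideanSpace ℝ (Fin d) → ENNReal :=
    fun x => ENNReal.ofReal ((∑ i, |A.mulVec (fun j => x j) i|) ^ d)⁻¹ with hh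
  set ψ : EuclideanSpace ℝ (Fin m) → EuclideanSpace ℝ (Fin d) := ψmap d hd1 with hψdef
  have hψiso : Isometry ψ := isometry_ψmap d hd1
  set T : Set (EuclideanSpace ℝ (Fin m)) := ψ ⁻¹' S with hT
  have hTmeas : MeasurableSet T := hS.preimage hψiso.continuous.measurable
  have hSrange : S ⊆ Set.range ψ := by
    intro y hy
    exact ψmap_surjOn d hd1 (sumLM_eq_one (hSΔ hy))
  have hψT : ψ '' T = S := Set.image_preimage_eq_of_subset hSrange
  -- points of T map into the simplex
  have hψΔ : ∀ u ∈ T, ψ u ∈ Δ d := fun u hu => hSΔ hu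
  have hψS : ∀ u ∈ T, ψ u ∈ S := fun u hu => hu
  -- the conjugated map and its derivative
  set g : EuclideanSpace ℝ (Fin m) → EuclideanSpace ℝ (Fin m) :=
    fun u => rmap d hd1 (pa d A (ψ u)) with hg
  set G' : EuclideanSpace ℝ (Fin m) →
      (EuclideanSpace ℝ (Fin m) →L[ℝ] EuclideanSpace ℝ (Fin m)) :=
    fun u => (rCLM d hd1).comp ((paDeriv d A (ψ u)).comp (ψCLM d hd1)) with hG'
  have hderiv : ∀ u ∈ T, HasFDerivWithinAt g (G' u) T u := by
    intro u hu
    have hs := spos hA hdet (hψΔ u hu)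
    have h1 : HasFDerivAt (fun v => rmap d hd1 (pa d A (ψ v))) (G' u) u := by
      have hψ' := hasFDerivAt_ψmap d hd1 u
      have hpa' := hasFDerivAt_pa A (ψ u) (ne_of_gt hs)
      have hr' := hasFDerivAt_rmap d hd1 (pa d A (ψ u))
      exact hr'.comp u (hpa'.comp u hψ')
    exact h1.hasFDerivWithinAt
  have hinj : Set.InjOn g T := by
    intro u hu v hv huv
    have h1 : ψmap d hd1 (g u) = pa d A (ψ u) :=
      ψmap_rmap d hd1 (sum_pa hA hdet (hψΔ u hu))
    have h2 : ψmap d hd1 (g v) = pa d A (ψ v) :=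
      ψmap_rmap d hd1 (sum_pa hA hdet (hψΔ v hv))
    have h3 : pa d A (ψ u) = pa d A (ψ v) := by rw [← h1, ← h2, huv]
    have h4 := pa_injOn hA hdet (hψΔ u hu) (hψΔ v hv) h3
    exact ψmap_injective d hd1 h4
  -- image identification
  have himage : JacAux3.projLinMap d A '' S = ψ '' (g '' T) := by
    have e1 : JacAux3.projLinMap d A '' S = pa d A '' S := by
      apply Set.image_congr
      intro y hy
      exact pa_eq_projLinMap hA (hSΔ hy)
    have e2 : ψ '' (g '' T) = pa d A '' S := by
      rw [← hψT, ← Set.image_comp, ← Set.image_comp]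
      apply Set.image_congr
      intro u hu
      exact ψmap_rmap d hd1 (sum_pa hA hdet (hψΔ u hu))
    rw [e1, ← e2]
  -- measurable embedding
  have hψemb : MeasurableEmbedding ψ :=
    hψiso.isClosedEmbedding.measurableEmbedding
  -- measure transfer for the restricted measure
  have hmeq : (μH[(m : ℝ)] : Measure (EuclideanSpace ℝ (Fin d))).restrict S
      = Measure.map ψ ((μH[(m : ℝ)] : Measure (EuclideanSpace ℝ (Fin m))).restrict T) := by
    ext B hB
    rw [Measure.restrict_apply hB,
      Measure.map_apply hψiso.continuous.measurable hB,
      Measure.restrict_apply (hB.preimage hψiso.continuous.measurable)]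
    have hBS : B ∩ S = ψ '' (ψ ⁻¹' B ∩ T) := by
      rw [← Set.preimage_inter, Set.image_preimage_eq_inter_range]
      exact (Set.inter_eq_self_of_subset_left (Set.inter_subset_right.trans hSrange)).symm ▸ rfl
    rw [hBS, hψiso.hausdorffMeasure_image (Or.inl (by positivity))]
  -- main computation
  rw [himage, hψiso.hausdorffMeasure_image (Or.inl (by positivity))]
  have hCOV := MeasureTheory.lintegral_image_eq_lintegral_abs_det_fderiv_mul
    (μ := (μH[(m : ℝ)] : Measure (EuclideanSpace ℝ (Fin m)))) hTmeas hderiv hinj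
    (fun _ => (1 : ENNReal))
  rw [setLIntegral_one] at hCOV
  rw [hCOV]
  have hintegrand : ∀ u ∈ T, ENNReal.ofReal |(G' u).det| * 1 = h (ψ u) := by
    intro u hu
    have hs := spos hA hdet (hψΔ u hu)
    have hdetG := det_paDeriv_hyperplane hd1 A (ψ u) hdet (sumLM_eq_one (hψΔ u hu))
      (ne_of_gt hs)
    rw [mul_one, hG', hdetG]
    have habs : ∀ i, |A.mulVec (fun j => (ψ u) j) i| = A.mulVec (fun j => (ψ u) j) i :=
      fun i => abs_of_nonneg (mulVec_nonneg hA (hψΔ u hu) i)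
    have hsum : (∑ i, |A.mulVec (fun j => (ψ u) j) i|) = sumLM d (mulVecLM d A (ψ u)) := by
      simp only [habs, sumLM_apply]
      rfl
    rw [hh]
    simp only [hsum]
    rw [abs_of_nonneg (by positivity)]
  rw [setLIntegral_congr_fun hTmeas hintegrand]
  rw [← hψT] at hS ⊢
  rw [show (∫⁻ x in ψ '' T, h x ∂μH[(m : ℝ)])
      = ∫⁻ x, h x ∂((μH[(m : ℝ)] : Measure (EuclideanSpace ℝ (Fin d))).restrict (ψ '' T))
      from rfl]
  rw [hψT, hmeq, hψemb.lintegral_map]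

end JacMain


set_option maxHeartbeats 1000000 in
/-- For a `d × d` matrix `A` with nonnegative entries and determinant `1`, the
Jacobian of the projectivized map `PA : Δ → Δ` with respect to the
`(d-1)`-dimensional Hausdorff measure is `‖A x‖₁⁻ᵈ`: for every Borel subset
`S ⊆ Δ` we have `μ (PA '' S) = ∫ x in S, ‖A x‖₁⁻ᵈ dμ(x)`. -/
theorem jacobian_projLinMap (d : ℕ) (hd : 2 ≤ d)
    (A : Matrix (Fin d) (Fin d) ℝ)
    (hA : ∀ i j, 0 ≤ A i j) (hdet : A.det = 1)
    (S : Set (EuclideanSpace ℝ (Fin d))) (hS : MeasurableSet S)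
    (hSΔ : S ⊆ euclideanStdSimplex d) :
    μH[(d : ℝ) - 1] (projLinMap d A '' S)
      = ∫⁻ x in S, ENNReal.ofReal ((∑ i, |A.mulVec (fun j => x j) i|) ^ d)⁻¹
          ∂(μH[(d : ℝ) - 1] : Measure (EuclideanSpace ℝ (Fin d))) := by
  exact JacMain.jacobian_projLinMap d hd A hA hdet S hS hSΔ
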